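/- For α > 0 and f continuous on [0,a] with a > 0, the limit as p → -1⁺ of the Katugampola-type integral ((p+1)^{1-α}/Γ(α)) ∫₀^a w^p f(w)(a^{p+1} - w^{p+1})^{α-1} dw equals the Hadamard fractional integral (1/Γ(α)) ∫₀^a (log(a/w))^{α-1} f(w) dw/w, provided the latter integral converges (e.g., f vanishing suitably near 0 or integrals taken from ε > 0). -/

import Mathlib

open scoped BigOperators

/-- Jackson q-integral ∫₀^b f d_q = (1-q) b ∑ q^i f(q^i b). -/
noncomputable def jackson (q b : ℝ) (f : ℝ → ℝ) : ℝ :=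
  (1 - q) * b * ∑' i : ℕ, q ^ i * f (q ^ i * b)

/-- Jackson q-integral ∫_a^b. -/
noncomputable def jacksonI (q a b : ℝ) (f : ℝ → ℝ) : ℝ :=
  jackson q b f - jackson q a f

/-- q-number [a]_q = (1-q^a)/(1-q). -/
noncomputable def qNum (q a : ℝ) : ℝ := (1 - q ^ a) / (1 - q)

/-- infinite q-Pochhammer (a;q)_∞. -/
noncomputable def qPochInf (a q : ℝ) : ℝ := ∏' j : ℕ, (1 - a * q ^ j)

/-- q-Gamma function Γ_q(t) = ((q;q)_∞/(q^t;q)_∞)(1-q)^{1-t}. -/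
noncomputable def qGamma (q t : ℝ) : ℝ :=
  (qPochInf q q / qPochInf (q ^ t) q) * (1 - q) ^ (1 - t)

/-- q-exponential E_q(z) = ∏ (1 + (1-q) q^k z). -/
noncomputable def qExpE (q z : ℝ) : ℝ := ∏' k : ℕ, (1 + (1 - q) * q ^ k * z)

/-- generalized Q-power (x - y)^{(γ)}_Q = x^γ (y/x;Q)_∞ / (Q^γ y/x;Q)_∞. -/
noncomputable def genPow (Q x y γ : ℝ) : ℝ :=
  x ^ γ * (qPochInf (y / x) Q / qPochInf (Q ^ γ * (y / x)) Q)

/-- q-derivative D_q h(x) = (h(x)-h(qx))/((1-q)x). -/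
noncomputable def qDeriv (q : ℝ) (h : ℝ → ℝ) (x : ℝ) : ℝ :=
  (h x - h (q * x)) / ((1 - q) * x)

section KH
open Real MeasureTheory Set Filter intervalIntegral

private lemma exp_bounds {ε a : ℝ} (hε : 0 < ε) {t s : ℝ}
    (ht1 : ε ≤ t) (ht2 : t ≤ a) (hs0 : 0 ≤ s) (hs1 : s ≤ 1) :
    min ε 1 ≤ t ^ s ∧ t ^ s ≤ max a 1 := by
  have ht0 : 0 < t := lt_of_lt_of_le hε ht1
  constructor
  · rcases le_or_gt t 1 with h | h
    · calc min ε 1 ≤ ε := min_le_left _ _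
        _ ≤ t := ht1
        _ = t ^ (1:ℝ) := (Real.rpow_one t).symm
        _ ≤ t ^ s := Real.rpow_le_rpow_of_exponent_ge ht0 h hs1
    · calc min ε 1 ≤ 1 := min_le_right _ _
        _ ≤ t ^ s := Real.one_le_rpow h.le hs0
  · rcases le_or_gt t 1 with h | h
    · exact le_max_of_le_right (Real.rpow_le_one ht0.le h hs0)
    · calc t ^ s ≤ t ^ (1:ℝ) := Real.rpow_le_rpow_of_exponent_le h.le hs1
        _ = t := Real.rpow_one t
        _ ≤ max a 1 := le_max_of_le_left ht2

private lemma h_bounds {ε a : ℝ} (hε : 0 < ε) {w p : ℝ}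
    (hw1 : ε ≤ w) (hw2 : w ≤ a) (hp1 : -1 < p) (hp2 : p ≤ 0) :
    min ε 1 * (Real.log a - Real.log w) ≤ (a ^ (p+1) - w ^ (p+1)) / (p+1) ∧
      (a ^ (p+1) - w ^ (p+1)) / (p+1) ≤ max a 1 * (Real.log a - Real.log w) := by
  have hw0 : 0 < w := lt_of_lt_of_le hε hw1
  have ha0 : 0 < a := lt_of_lt_of_le hw0 hw2
  have hInt : (a ^ (p+1) - w ^ (p+1)) / (p+1) = ∫ t in w..a, t ^ p :=
    (integral_rpow (Or.inl hp1)).symm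
  have hlog : ∀ c : ℝ, (∫ t in w..a, c * t⁻¹) = c * (Real.log a - Real.log w) := by
    intro c
    rw [intervalIntegral.integral_const_mul, integral_inv (by
      intro h0
      rcases Set.mem_uIcc.mp h0 with ⟨h1, _⟩ | ⟨h1, _⟩ <;> linarith),
      Real.log_div ha0.ne' hw0.ne']
  have key : ∀ t ∈ Set.Icc w a, min ε 1 * t⁻¹ ≤ t ^ p ∧ t ^ p ≤ max a 1 * t⁻¹ := by
    intro t ht
    have ht0 : 0 < t := lt_of_lt_of_le hw0 ht.1
    have hts : t ^ p = t ^ (p+1) * t⁻¹ := by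
      rw [← Real.rpow_neg_one t, ← Real.rpow_add ht0]; ring_nf
    obtain ⟨hb1, hb2⟩ := exp_bounds hε (le_trans hw1 ht.1) ht.2
      (by linarith : (0:ℝ) ≤ p + 1) (by linarith : p + 1 ≤ 1)
    constructor
    · rw [hts]; exact mul_le_mul_of_nonneg_right hb1 (inv_nonneg.mpr ht0.le)
    · rw [hts]; exact mul_le_mul_of_nonneg_right hb2 (inv_nonneg.mpr ht0.le)
  have hIc : ContinuousOn (fun t : ℝ => t ^ p) (Set.uIcc w a) := by
    apply ContinuousOn.rpow_const continuousOn_id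
    intro t ht
    rw [Set.uIcc_of_le hw2] at ht
    exact Or.inl (ne_of_gt (lt_of_lt_of_le hw0 ht.1))
  have hIr : IntervalIntegrable (fun t : ℝ => t ^ p) volume w a :=
    hIc.intervalIntegrable
  have hIinv : ∀ c : ℝ, IntervalIntegrable (fun t : ℝ => c * t⁻¹) volume w a := by
    intro c
    apply ContinuousOn.intervalIntegrable
    apply ContinuousOn.mul continuousOn_const
    apply ContinuousOn.inv₀ continuousOn_id
    intro t ht
    rw [Set.uIcc_of_le hw2] at ht
    exact ne_of_gt (lt_of_lt_of_le hw0 ht.1)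
  constructor
  · rw [hInt, ← hlog]
    exact intervalIntegral.integral_mono_on hw2 (hIinv _) hIr (fun t ht => (key t ht).1)
  · rw [hInt, ← hlog]
    exact intervalIntegral.integral_mono_on hw2 hIr (hIinv _) (fun t ht => (key t ht).2)

private lemma h_tendsto {a w : ℝ} (hw : 0 < w) (ha : 0 < a) :
    Tendsto (fun p : ℝ => (a ^ (p+1) - w ^ (p+1)) / (p+1))
      (nhdsWithin (-1) (Set.Ioi (-1))) (nhds (Real.log a - Real.log w)) := by
  have hA : HasDerivAt (fun t : ℝ => a ^ t - w ^ t) (Real.log a - Real.log w) 0 := by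
    have h1 := (Real.hasStrictDerivAt_const_rpow ha 0).hasDerivAt
    have h2 := (Real.hasStrictDerivAt_const_rpow hw 0).hasDerivAt
    have h3 := h1.sub h2
    rw [Real.rpow_zero, Real.rpow_zero, one_mul, one_mul] at h3
    exact h3
  have hslope := hasDerivAt_iff_tendsto_slope.mp hA
  have hmap : Tendsto (fun p : ℝ => p + 1) (nhdsWithin (-1) (Set.Ioi (-1)))
      (nhdsWithin 0 {(0:ℝ)}ᶜ) := by
    apply tendsto_nhdsWithin_of_tendsto_nhds_of_eventually_within
    · have h0 : Tendsto (fun p : ℝ => p + 1) (nhds (-1)) (nhds ((-1) + 1)) :=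
        (continuous_id.add continuous_const).tendsto (-1 : ℝ)
      norm_num at h0
      exact h0.mono_left nhdsWithin_le_nhds
    · filter_upwards [self_mem_nhdsWithin] with p hp
      have : (-1:ℝ) < p := hp
      simp only [Set.mem_compl_iff, Set.mem_singleton_iff]
      intro h
      have h' : p = -1 := by linarith
      rw [h'] at this
      exact lt_irrefl _ this
  have := hslope.comp hmap
  apply this.congr
  intro p
  simp [slope_fun_def_field, Real.rpow_zero, Function.comp]

private lemma pow_bound {c₁ c₂ h L β : ℝ} (hc₁ : 0 < c₁) (hc₂ : 0 < c₂) (hL : 0 ≤ L)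
    (h₁ : c₁ * L ≤ h) (h₂ : h ≤ c₂ * L) :
    h ^ β ≤ max (c₁ ^ β) (c₂ ^ β) * L ^ β := by
  rcases eq_or_lt_of_le hL with hL0 | hL0
  · have hh : h = 0 := le_antisymm (by rw [← hL0] at h₂; simpa using h₂)
      (le_trans (by rw [← hL0]; simp) h₁)
    subst hh
    rw [← hL0]
    rcases eq_or_ne β 0 with hβ | hβ
    · subst hβ; simp
    · rw [Real.zero_rpow hβ]; simp [Real.zero_rpow hβ]
  · have hh0 : 0 ≤ h := le_trans (by positivity) h₁
    rcases le_total 0 β with hβ | hβ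
    · calc h ^ β ≤ (c₂ * L) ^ β := Real.rpow_le_rpow hh0 h₂ hβ
        _ = c₂ ^ β * L ^ β := Real.mul_rpow hc₂.le hL
        _ ≤ max (c₁ ^ β) (c₂ ^ β) * L ^ β :=
          mul_le_mul_of_nonneg_right (le_max_right _ _) (Real.rpow_nonneg hL _)
    · calc h ^ β ≤ (c₁ * L) ^ β := Real.rpow_le_rpow_of_nonpos (by positivity) h₁ hβ
        _ = c₁ ^ β * L ^ β := Real.mul_rpow hc₁.le hL
        _ ≤ max (c₁ ^ β) (c₂ ^ β) * L ^ β :=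
          mul_le_mul_of_nonneg_right (le_max_left _ _) (Real.rpow_nonneg hL _)

private lemma bound_int {ε a α : ℝ} (hε : 0 < ε) (hεa : ε < a) (hα : 0 < α) :
    IntervalIntegrable (fun w => (Real.log a - Real.log w) ^ (α - 1) / w) volume ε a := by
  have ha : 0 < a := hε.trans hεa
  have hrpow : Continuous fun y : ℝ => y ^ α := by
    rw [continuous_iff_continuousAt]
    intro y
    exact Real.continuousAt_rpow_const y α (Or.inr hα.le)
  apply intervalIntegrable_deriv_of_nonneg
    (g := fun w => -(Real.log a - Real.log w) ^ α / α)
  · apply ContinuousOn.div_const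
    apply ContinuousOn.neg
    apply hrpow.comp_continuousOn
    exact continuousOn_const.sub (Real.continuousOn_log.mono (by
      intro x hx
      rw [Set.uIcc_of_le hεa.le] at hx
      exact ne_of_gt (lt_of_lt_of_le hε hx.1)))
  · rw [min_eq_left hεa.le, max_eq_right hεa.le]
    intro x hx
    have hx0 : 0 < x := hε.trans hx.1
    have hL : 0 < Real.log a - Real.log x := by
      have := Real.log_lt_log hx0 hx.2
      linarith
    have h1 : HasDerivAt (fun w : ℝ => Real.log a - Real.log w) (-x⁻¹) x :=
      (Real.hasDerivAt_log hx0.ne').const_sub _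
    have h2 : HasDerivAt (fun y : ℝ => y ^ α) (α * (Real.log a - Real.log x) ^ (α - 1))
        (Real.log a - Real.log x) := Real.hasDerivAt_rpow_const (Or.inl hL.ne')
    have h3 := (h2.comp x h1).neg.div_const α
    refine h3.congr_deriv ?_
    field_simp
  · rw [min_eq_left hεa.le, max_eq_right hεa.le]
    intro x hx
    have hx0 : 0 < x := hε.trans hx.1
    have hL : 0 ≤ Real.log a - Real.log x := by
      have := Real.log_lt_log hx0 hx.2
      linarith
    positivity

end KH

theorem katugampola_tendsto_hadamard (α a ε : ℝ) (f : ℝ → ℝ)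
    (hα : 0 < α) (hε : 0 < ε) (hεa : ε < a) (hf : ContinuousOn f (Set.Icc ε a)) :
    Filter.Tendsto
      (fun p => ((p + 1) ^ (1 - α) / Real.Gamma α) *
        ∫ w in ε..a, w ^ p * f w * (a ^ (p + 1) - w ^ (p + 1)) ^ (α - 1))
      (nhdsWithin (-1) (Set.Ioi (-1)))
      (nhds ((1 / Real.Gamma α) * ∫ w in ε..a, (Real.log (a / w)) ^ (α - 1) * f w / w)) := by
  classical
  open Real MeasureTheory Set Filter intervalIntegral in
  have ha : 0 < a := hε.trans hεa
  set l := nhdsWithin (-1:ℝ) (Set.Ioi (-1)) with hl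
  obtain ⟨M, hM⟩ := isCompact_Icc.exists_bound_of_continuousOn hf
  have hM0 : 0 ≤ M := le_trans (norm_nonneg _) (hM ε ⟨le_refl _, hεa.le⟩)
  set c₁ := min ε 1 with hc₁def
  set c₂ := max a 1 with hc₂def
  have hc₁ : 0 < c₁ := lt_min hε one_pos
  have hc₂ : 0 < c₂ := lt_of_lt_of_le ha (le_max_left _ _)
  set C := max (c₁ ^ (α-1)) (c₂ ^ (α-1)) with hCdef
  have hC : 0 < C := lt_of_lt_of_le (Real.rpow_pos_of_pos hc₁ _) (le_max_left _ _)
  set F : ℝ → ℝ → ℝ :=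
    fun p w => w ^ p * f w * ((a ^ (p+1) - w ^ (p+1)) / (p+1)) ^ (α - 1) with hFdef
  have key : Filter.Tendsto (fun p => ∫ w in ε..a, F p w) l
      (nhds (∫ w in ε..a, (Real.log (a / w)) ^ (α - 1) * f w / w)) := by
    apply intervalIntegral.tendsto_integral_filter_of_dominated_convergence
      (bound := fun w => c₂ * M * C * ((Real.log a - Real.log w) ^ (α - 1) / w))
    · -- measurability
      filter_upwards [self_mem_nhdsWithin] with p hp
      have hp1 : (0:ℝ) < p + 1 := by
        have : (-1:ℝ) < p := hp
        linarith
      rw [Set.uIoc_of_le hεa.le,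
        (MeasureTheory.Measure.restrict_congr_set MeasureTheory.Ioo_ae_eq_Ioc).symm]
      apply ContinuousOn.aestronglyMeasurable _ measurableSet_Ioo
      apply ContinuousOn.mul
      apply ContinuousOn.mul
      · apply ContinuousOn.rpow_const continuousOn_id
        intro w hw
        exact Or.inl (ne_of_gt (hε.trans hw.1))
      · exact hf.mono (fun w hw => ⟨hw.1.le, hw.2.le⟩)
      · apply ContinuousOn.rpow_const
        · exact (continuousOn_const.sub (continuousOn_id.rpow_const
            (fun w hw => Or.inl (ne_of_gt (hε.trans hw.1))))).div_const _
        · intro w hw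
          have hw0 : 0 < w := hε.trans hw.1
          left
          have hlt : w ^ (p+1) < a ^ (p+1) := Real.rpow_lt_rpow hw0.le hw.2 hp1
          have : 0 < (a ^ (p+1) - w ^ (p+1)) / (p+1) := by
            apply div_pos _ hp1
            linarith
          exact this.ne'
    · -- bound
      have hIoc : Set.Ioc (-1:ℝ) 0 ∈ l :=
        Ioc_mem_nhdsGT_of_mem (Set.mem_Ico.mpr ⟨le_refl (-1:ℝ), by norm_num⟩)
      filter_upwards [hIoc] with p hp
      apply Filter.Eventually.of_forall
      intro x hx
      rw [Set.uIoc_of_le hεa.le] at hx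
      have hx0 : 0 < x := hε.trans hx.1
      have hL : 0 ≤ Real.log a - Real.log x :=
        sub_nonneg.mpr (Real.log_le_log hx0 hx.2)
      obtain ⟨hb1, hb2⟩ := h_bounds hε hx.1.le hx.2 hp.1 hp.2
      have hxp : x ^ p ≤ c₂ / x := by
        have hexp := (exp_bounds hε hx.1.le hx.2
          (by linarith [hp.1] : (0:ℝ) ≤ p+1) (by linarith [hp.2] : p+1 ≤ 1)).2
        have hts : x ^ p = x ^ (p+1) * x⁻¹ := by
          rw [← Real.rpow_neg_one x, ← Real.rpow_add hx0]; ring_nf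
        rw [hts, div_eq_mul_inv]
        exact mul_le_mul_of_nonneg_right hexp (inv_nonneg.mpr hx0.le)
      have hpow := pow_bound (β := α - 1) hc₁ hc₂ hL hb1 hb2
      have hh0 : 0 ≤ (a ^ (p+1) - x ^ (p+1)) / (p+1) := le_trans (by positivity) hb1
      have hnorm : ‖F p x‖
          = x ^ p * ‖f x‖ * ((a ^ (p+1) - x ^ (p+1)) / (p+1)) ^ (α-1) := by
        rw [hFdef]
        simp only [norm_mul]
        rw [Real.norm_of_nonneg (Real.rpow_nonneg hx0.le _),
          Real.norm_of_nonneg (Real.rpow_nonneg hh0 _)]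
      rw [hnorm]
      calc x ^ p * ‖f x‖ * ((a ^ (p+1) - x ^ (p+1)) / (p+1)) ^ (α-1)
          ≤ (c₂ / x) * M * (C * (Real.log a - Real.log x) ^ (α-1)) := by
            apply mul_le_mul _ hpow (Real.rpow_nonneg hh0 _)
              (mul_nonneg (by positivity) hM0)
            exact mul_le_mul hxp (hM x ⟨hx.1.le, hx.2⟩) (norm_nonneg _) (by positivity)
        _ = c₂ * M * C * ((Real.log a - Real.log x) ^ (α-1) / x) := by ring
    · exact (bound_int hε hεa hα).const_mul _
    · -- pointwise limit
      have hae : ∀ᵐ x : ℝ, x ≠ a := by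
        refine (MeasureTheory.ae_iff).mpr ?_
        have : {x : ℝ | ¬x ≠ a} = {a} := by ext x; simp
        rw [this]
        exact MeasureTheory.measure_singleton a
      filter_upwards [hae] with x hxa hx
      rw [Set.uIoc_of_le hεa.le] at hx
      have hx0 : 0 < x := hε.trans hx.1
      have hxa' : x < a := lt_of_le_of_ne hx.2 hxa
      have hL : 0 < Real.log a - Real.log x :=
        sub_pos.mpr (Real.log_lt_log hx0 hxa')
      have T1 : Filter.Tendsto (fun p : ℝ => x ^ p) l (nhds (x ^ (-1:ℝ))) := by
        have hc : ContinuousAt (fun q : ℝ × ℝ => q.1 ^ q.2) (x, -1) :=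
          Real.continuousAt_rpow (x, -1) (Or.inl hx0.ne')
        have hpr : Filter.Tendsto (fun p : ℝ => ((x : ℝ), p)) (nhds (-1)) (nhds (x, -1)) :=
          (continuous_const.prodMk continuous_id).tendsto (-1 : ℝ)
        exact (hc.tendsto.comp hpr).mono_left nhdsWithin_le_nhds
      have T3 : Filter.Tendsto (fun p : ℝ => ((a ^ (p+1) - x ^ (p+1)) / (p+1)) ^ (α-1)) l
          (nhds ((Real.log a - Real.log x) ^ (α-1))) :=
        ((Real.continuousAt_rpow_const _ (α-1) (Or.inl hL.ne')).tendsto).comp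
          (h_tendsto hx0 ha)
      have hT : Filter.Tendsto (fun p : ℝ => x ^ p * f x * ((a ^ (p+1) - x ^ (p+1)) / (p+1)) ^ (α-1)) l
          (nhds (x ^ (-1:ℝ) * f x * (Real.log a - Real.log x) ^ (α-1))) :=
        (T1.mul (tendsto_const_nhds (x := f x))).mul T3
      have heq : (Real.log (a/x)) ^ (α-1) * f x / x
          = x ^ (-1:ℝ) * f x * (Real.log a - Real.log x) ^ (α-1) := by
        rw [Real.log_div ha.ne' hx0.ne', Real.rpow_neg_one, div_eq_mul_inv]; ring
      rw [heq]
      exact hT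
  have final := key.const_mul (1 / Real.Gamma α)
  apply final.congr'
  filter_upwards [self_mem_nhdsWithin] with p hp
  have hp1 : (0:ℝ) < p + 1 := by
    have : (-1:ℝ) < p := hp
    linarith
  have hcong : ∀ w ∈ Set.uIcc ε a, F p w
      = (w ^ p * f w * (a ^ (p+1) - w ^ (p+1)) ^ (α-1)) * ((p+1) ^ (1-α)) := by
    intro w hw
    rw [Set.uIcc_of_le hεa.le] at hw
    have hw0 : 0 < w := lt_of_lt_of_le hε hw.1
    have hX : 0 ≤ a ^ (p+1) - w ^ (p+1) :=
      sub_nonneg.mpr (Real.rpow_le_rpow hw0.le hw.2 hp1.le)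
    have hdiv : ((a ^ (p+1) - w ^ (p+1)) / (p+1)) ^ (α-1)
        = (a ^ (p+1) - w ^ (p+1)) ^ (α-1) * (p+1) ^ (1-α) := by
      rw [Real.div_rpow hX hp1.le, show (1-α) = -(α-1) by ring,
        Real.rpow_neg hp1.le, div_eq_mul_inv]
    rw [hFdef]
    simp only
    rw [hdiv]; ring
  rw [intervalIntegral.integral_congr hcong, intervalIntegral.integral_mul_const]
  ring
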